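/- arXiv:2309.10046 — 3 statements merged into one kernel-verified Lean document; each statement's English description precedes it below -/
import Mathlib

section
/- Let E be a Banach space and let Y be a closed linear subspace of the dual space E* such that the closed unit ball of Y is dense in the closed unit ball of E* with respect to the weak-* topology of E*. Let j : E → Y* be the evaluation map j(x)(y) = y(x). Then the image under j of the closed unit ball of E is dense in the closed unit ball of Y* with respect to the weak-* topology of Y* (the topology of pointwise convergence on Y): for every φ ∈ Y* with ‖φ‖ ≤ 1 there is a net (x_i) in E with ‖x_i‖ ≤ 1 such that y(x_i) → φ(y) for every y ∈ Y. -/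
open RCLike Metric

lemma re_bound_opNorm {𝕜 : Type} [RCLike 𝕜] {E : Type}
    [NormedAddCommGroup E] [NormedSpace 𝕜 E]
    (g : E →L[𝕜] 𝕜) (u : ℝ) (hu : 0 < u)
    (h : ∀ x : E, ‖x‖ ≤ 1 → RCLike.re (g x) < u) : ‖g‖ ≤ u := by
  have hball : ∀ x : E, ‖x‖ ≤ 1 → ‖g x‖ ≤ u := by
    intro x hx
    rcases eq_or_ne (g x) 0 with h0 | h0
    · simp [h0, hu.le]
    · set c : 𝕜 := (‖g x‖ : 𝕜) / g x with hc
      have hcnorm : ‖c‖ = 1 := by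
        rw [hc, norm_div, RCLike.norm_ofReal, abs_norm, div_self (norm_ne_zero_iff.2 h0)]
      have h1 : g (c • x) = (‖g x‖ : 𝕜) := by
        rw [map_smul, smul_eq_mul, hc, div_mul_cancel₀ _ h0]
      have h2 : ‖c • x‖ ≤ 1 := by
        rw [norm_smul, hcnorm, one_mul]; exact hx
      have h3 := h (c • x) h2
      rw [h1, RCLike.ofReal_re] at h3
      exact h3.le
  refine ContinuousLinearMap.opNorm_le_bound _ hu.le fun x => ?_
  rcases eq_or_ne x 0 with rfl | hx0
  · simp
  · have hn : (0:ℝ) < ‖x‖ := norm_pos_iff.2 hx0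
    have h3 := hball (((‖x‖⁻¹ : ℝ) : 𝕜) • x)
      (by rw [norm_smul, RCLike.norm_ofReal, abs_inv, abs_norm, inv_mul_cancel₀ hn.ne'])
    rw [map_smul, smul_eq_mul, norm_mul, RCLike.norm_ofReal, abs_inv, abs_norm] at h3
    calc ‖g x‖ = ‖x‖ * (‖x‖⁻¹ * ‖g x‖) := by field_simp
      _ ≤ ‖x‖ * u := mul_le_mul_of_nonneg_left h3 hn.le
      _ = u * ‖x‖ := mul_comm _ _

set_option maxHeartbeats 2000000 in
lemma evalOn_key {𝕜 : Type} [RCLike 𝕜] {E : Type}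
    [NormedAddCommGroup E] [NormedSpace 𝕜 E]
    (Y : Submodule 𝕜 (E →L[𝕜] 𝕜))
    (φ : StrongDual 𝕜 ↥Y) (hφ : @Norm.norm _ (ContinuousLinearMap.hasOpNorm (𝕜 := 𝕜) (𝕜₂ := 𝕜) (E := ↥Y) (F := 𝕜)
      (σ₁₂ := RingHom.id 𝕜)) φ ≤ 1)
    (s : Finset Y) (δ : ℝ) (hδ : 0 < δ) :
    ∃ x : E, ‖x‖ ≤ 1 ∧ ∀ y ∈ s, ‖(y : E →L[𝕜] 𝕜) x - φ y‖ < δ := by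
  classical
  set V := (↥s → 𝕜)
  -- the "sampling" map
  let T : E → V := fun x y => ((y : Y) : E →L[𝕜] 𝕜) x
  let v : V := fun y => φ (y : Y)
  set C : Set V := T '' (closedBall (0 : E) 1) with hC
  have hCconv : Convex ℝ C := by
    rintro w1 ⟨x1, hx1, rfl⟩ w2 ⟨x2, hx2, rfl⟩ p q hp hq hpq
    simp only [mem_closedBall, dist_zero_right] at hx1 hx2
    refine ⟨((p:ℝ):𝕜) • x1 + ((q:ℝ):𝕜) • x2, ?_, ?_⟩
    · simp only [mem_closedBall, dist_zero_right]
      calc ‖((p:ℝ):𝕜) • x1 + ((q:ℝ):𝕜) • x2‖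
          ≤ ‖((p:ℝ):𝕜) • x1‖ + ‖((q:ℝ):𝕜) • x2‖ := norm_add_le _ _
        _ = p * ‖x1‖ + q * ‖x2‖ := by
            rw [norm_smul, norm_smul, RCLike.norm_ofReal, RCLike.norm_ofReal,
              abs_of_nonneg hp, abs_of_nonneg hq]
        _ ≤ p * 1 + q * 1 := by
            gcongr
        _ = 1 := by linarith
    · funext y
      rw [Pi.add_apply, Pi.smul_apply, Pi.smul_apply, RCLike.real_smul_eq_coe_mul,
        RCLike.real_smul_eq_coe_mul]
      simp only [T, map_add, map_smul, smul_eq_mul, Pi.add_apply]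
  have hv : v ∈ closure C := by
    by_contra hvC
    obtain ⟨f, u, hfa, hfv⟩ := RCLike.geometric_hahn_banach_closed_point (𝕜 := 𝕜)
      hCconv.closure isClosed_closure hvC
    have hfa' : ∀ x : E, ‖x‖ ≤ 1 → re (f (T x)) < u := fun x hx =>
      hfa (T x) (subset_closure ⟨x, by simpa using hx, rfl⟩)
    have hu : 0 < u := by
      have := hfa' 0 (by simp)
      have hT0 : T 0 = 0 := funext fun y => map_zero _
      rw [hT0] at this
      simpa using this
    -- expand f on the finite-dimensional space
    let a : ↥s → 𝕜 := fun y => f (fun j => if y = j then (1:𝕜) else 0)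
    have hf : ∀ w : V, f w = ∑ y, w y * a y := by
      intro w
      conv_lhs => rw [pi_eq_sum_univ w, map_sum]
      simp [a, smul_eq_mul]
    set yY : Y := ∑ y : ↥s, a y • (y : Y) with hyY
    have hyYapp : ∀ x : E, ((yY : Y) : E →L[𝕜] 𝕜) x = f (T x) := by
      intro x
      rw [hf]
      simp only [hyY]
      rw [Submodule.coe_sum, ContinuousLinearMap.sum_apply]
      refine Finset.sum_congr rfl fun y _ => ?_
      simp [T, mul_comm]
    have hφyY : φ yY = f v := by
      rw [hf, hyY, map_sum]
      refine Finset.sum_congr rfl fun y _ => ?_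
      simp [v, mul_comm]
    have hyYnorm : ‖yY‖ ≤ u := by
      rw [Submodule.coe_norm]
      refine re_bound_opNorm _ u hu fun x hx => ?_
      rw [hyYapp]
      exact hfa' x hx
    -- contradiction
    have hre : re (f v) ≤ u := by
      rw [← hφyY]
      calc re (φ yY) ≤ ‖φ yY‖ := re_le_norm _
        _ ≤ @Norm.norm _ (ContinuousLinearMap.hasOpNorm (𝕜 := 𝕜) (𝕜₂ := 𝕜) (E := ↥Y) (F := 𝕜)
      (σ₁₂ := RingHom.id 𝕜)) φ * ‖yY‖ := ContinuousLinearMap.le_opNorm (𝕜 := 𝕜) (𝕜₂ := 𝕜) (E := ↥Y) (F := 𝕜) (σ₁₂ := RingHom.id 𝕜) φ _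
        _ ≤ 1 * u := mul_le_mul hφ hyYnorm (norm_nonneg yY) zero_le_one
        _ = u := one_mul u
    exact absurd hfv (not_lt.2 hre)
  -- extract approximation
  obtain ⟨w, hwC, hwv⟩ := Metric.mem_closure_iff.1 hv δ hδ
  obtain ⟨x, hx, rfl⟩ := hwC
  simp only [mem_closedBall, dist_zero_right] at hx
  refine ⟨x, hx, fun y hy => ?_⟩
  have hle : dist (v ⟨y, hy⟩) (T x ⟨y, hy⟩) ≤ dist v (T x) := dist_le_pi_dist v (T x) ⟨y, hy⟩
  have h2 : ‖(↑y : E →L[𝕜] 𝕜) x - φ y‖ = dist (v ⟨y, hy⟩) (T x ⟨y, hy⟩) := by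
    rw [dist_eq_norm]
    simp only [T, v]
    rw [norm_sub_rev]
  rw [h2]
  exact lt_of_le_of_lt hle hwv
/-- If `Y` is a closed subspace of `E*` whose closed unit ball is weak-* dense in the
closed unit ball of `E*`, then the image under the evaluation map `j : E → Y*` of the
closed unit ball of `E` is weak-* dense in the closed unit ball of `Y*`: for every
`φ ∈ Y*` with `‖φ‖ ≤ 1` there is a net `(x_i)` in `E` of norm at most `1` such that
`y(x_i) → φ(y)` for every `y ∈ Y`. -/
theorem evalOn_unitBall_weakStarDense {𝕜 : Type} [RCLike 𝕜] {E : Type}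
    [NormedAddCommGroup E] [NormedSpace 𝕜 E] [CompleteSpace E]
    (Y : Submodule 𝕜 (E →L[𝕜] 𝕜))
    (hYclosed : IsClosed (Y : Set (E →L[𝕜] 𝕜)))
    (hdense : ∀ φ : E →L[𝕜] 𝕜, ‖φ‖ ≤ 1 → ∀ (s : Finset E) (δ : ℝ), 0 < δ →
      ∃ y ∈ Y, ‖y‖ ≤ 1 ∧ ∀ x ∈ s, ‖y x - φ x‖ < δ)
    (φ : StrongDual 𝕜 ↥Y) (hφ : @Norm.norm _ (ContinuousLinearMap.hasOpNorm (𝕜 := 𝕜) (𝕜₂ := 𝕜) (E := ↥Y) (F := 𝕜)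
      (σ₁₂ := RingHom.id 𝕜)) φ ≤ 1) :
    ∃ (I : Type) (_ : Preorder I), Nonempty I ∧ IsDirected I (· ≤ ·) ∧
      ∃ x : I → E, (∀ i, ‖x i‖ ≤ 1) ∧
        ∀ y : Y, ∀ δ : ℝ, 0 < δ → ∃ i₀ : I, ∀ i, i₀ ≤ i →
          ‖(y : E →L[𝕜] 𝕜) (x i) - φ y‖ < δ := by
  classical
  refine ⟨Finset Y × ℕ, inferInstance, ⟨(∅, 0)⟩, ?_, ?_⟩
  · constructor
    rintro ⟨s, n⟩ ⟨t, m⟩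
    exact ⟨(s ∪ t, max n m), ⟨Finset.subset_union_left, le_max_left _ _⟩,
      ⟨Finset.subset_union_right, le_max_right _ _⟩⟩
  · have H : ∀ i : Finset Y × ℕ, ∃ x : E, ‖x‖ ≤ 1 ∧
        ∀ y ∈ i.1, ‖(y : E →L[𝕜] 𝕜) x - φ y‖ < 1 / (i.2 + 1) :=
      fun i => evalOn_key Y φ hφ i.1 (1 / (i.2 + 1)) (by positivity)
    choose x hx1 hx2 using H
    refine ⟨x, hx1, fun y δ hδ => ?_⟩
    obtain ⟨n, hn⟩ := exists_nat_one_div_lt hδ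
    refine ⟨({y}, n), fun i hi => ?_⟩
    have hy : y ∈ i.1 := hi.1 (Finset.mem_singleton_self y)
    have h1 : (1:ℝ) / (i.2 + 1) ≤ 1 / (n + 1) := by
      have h2 : (n:ℝ) ≤ (i.2:ℝ) := Nat.cast_le.2 hi.2
      exact one_div_le_one_div_of_le (by positivity) (by linarith)
    exact lt_of_lt_of_le (hx2 i y hy) (le_of_lt (lt_of_le_of_lt h1 hn))
end

section
/- Let Γ be a discrete group and let S be a nonempty family of unitary representations of Γ. Suppose there exist ε > 0, a directed set I, and for each i ∈ I a representation π_i ∈ S on a Hilbert space H_i and a unit vector ξ_i ∈ H_i, such that the functions f_i(g) = ⟨π_i(g)ξ_i, ξ_i⟩ satisfy: for every g ∈ Γ there is i₀ ∈ I such that for all i ≥ i₀ the number f_i(g) is real and f_i(g) ≥ ε. Then S has almost invariant vectors: for every finite subset F ⊆ Γ and every δ > 0 there exist a representation π ∈ S on a Hilbert space H_π and a unit vector ξ ∈ H_π with ‖π(g)ξ − ξ‖ < δ for all g ∈ F. -/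
open scoped ComplexOrder Pointwise

/-- Pigeonhole: a sequence starting `≤ 1`, nonnegative at `L`, must have a small drop. -/
lemma aux_exists_small_drop (b : ℕ → ℝ) (κ : ℝ) (L : ℕ) (hb0 : b 0 ≤ 1) (hbL : 0 ≤ b L)
    (hL : 1 < (L : ℝ) * κ) : ∃ ℓ < L, b ℓ - κ ≤ b (ℓ + 1) := by
  by_contra h
  push_neg at h
  have key : ∀ n, n ≤ L → b n ≤ b 0 - n * κ := by
    intro n hn
    induction n with
    | zero => simp
    | succ m ih =>
      have hm : m < L := lt_of_lt_of_le (Nat.lt_succ_self m) hn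
      have h1 := h m hm
      have h2 := ih (le_of_lt hm)
      push_cast
      nlinarith
  have := key L le_rfl
  nlinarith

set_option maxHeartbeats 2000000 in
/-- Let `Γ` be a discrete group and let `S = (π s)_{s : ι}` be a nonempty family of unitary
representations of `Γ`. If there are `ε > 0` and a net of normalized coefficient functions
`f_i(g) = ⟨π_{s i}(g) ξ_i, ξ_i⟩` (with unit vectors `ξ_i`) such that for every `g ∈ Γ`
the values `f_i(g)` are eventually real and `≥ ε`, then `S` has almost invariant vectors. -/
theorem almost_invariant_vectors_of_eventually_separated
    {Γ : Type} [Group Γ] {ι : Type} [Nonempty ι]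
    (Hs : ι → Type) [∀ s, NormedAddCommGroup (Hs s)] [∀ s, InnerProductSpace ℂ (Hs s)]
    [∀ s, CompleteSpace (Hs s)]
    (π : ∀ s, Γ →* unitary (Hs s →L[ℂ] Hs s))
    (ε : ℝ) (hε : 0 < ε)
    (I : Type) (pI : Preorder I) (hne : Nonempty I) (hdir : IsDirected I (· ≤ ·))
    (s : I → ι) (ξ : ∀ i, Hs (s i)) (hξ : ∀ i, ‖ξ i‖ = 1)
    (hsep : ∀ g : Γ, ∃ i₀ : I, ∀ i, i₀ ≤ i →
      (ε : ℂ) ≤ (inner ℂ (ξ i) (((π (s i) g : unitary (Hs (s i) →L[ℂ] Hs (s i))) :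
        Hs (s i) →L[ℂ] Hs (s i)) (ξ i)) : ℂ)) :
    ∀ (F : Finset Γ) (δ : ℝ), 0 < δ → ∃ (t : ι) (η : Hs t), ‖η‖ = 1 ∧
      ∀ g ∈ F, ‖((π t g : unitary (Hs t →L[ℂ] Hs t)) : Hs t →L[ℂ] Hs t) η - η‖ < δ := by
  haveI := pI; haveI := hne; haveI := hdir
  intro F δ hδ
  classical
  have hε1 : ∃ ε' : ℝ, 0 < ε' ∧ ε' ≤ 1 ∧ ε' ≤ ε := ⟨min ε 1, by positivity, min_le_right _ _,
    min_le_left _ _⟩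
  obtain ⟨ε', hε'pos, hε'le1, hε'le⟩ := hε1
  -- constants
  set κ : ℝ := min (ε' ^ 2 * δ ^ 2 / 16) 1 with hκdef
  have hκpos : 0 < κ := lt_min (by positivity) one_pos
  have hκ1 : κ ≤ 1 := min_le_right _ _
  have hκδ : 8 * κ < (ε' * δ) ^ 2 := by
    have : κ ≤ ε' ^ 2 * δ ^ 2 / 16 := min_le_left _ _
    nlinarith [mul_pos hε'pos hδ]
  obtain ⟨L, hLgt⟩ := exists_nat_gt (1 / κ)
  have hL : 1 < (L : ℝ) * κ := by
    rw [div_lt_iff₀ hκpos] at hLgt; linarith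
  -- the word balls
  set E : Finset Γ := insert (1 : Γ) F with hE
  have hEone : (1 : Γ) ∈ E := Finset.mem_insert_self _ _
  have hmem_succ : ∀ n, ∀ g ∈ E, ∀ w ∈ E ^ n, g * w ∈ E ^ (n + 1) := by
    intro n g hg w hw
    rw [pow_succ']
    exact Finset.mul_mem_mul hg hw
  have hEmono : ∀ n, (E ^ n : Finset Γ) ⊆ E ^ (n + 1) := by
    intro n w hw
    simpa using hmem_succ n 1 hEone w hw
  have hEmono' : ∀ m n, m ≤ n → (E ^ m : Finset Γ) ⊆ E ^ n := by
    intro m n hmn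
    induction n with
    | zero => simpa [Nat.le_zero.mp hmn] using Finset.Subset.refl _
    | succ k ih =>
      rcases Nat.lt_or_ge m (k + 1) with h | h
      · exact (ih (Nat.lt_succ_iff.mp h)).trans (hEmono k)
      · have : m = k + 1 := le_antisymm hmn h
        simp [this]
  -- choose a good index j
  choose i0 hi0 using hsep
  obtain ⟨j0, hj0⟩ := @Finset.exists_le I hne pI hdir ((E ^ L).image i0)
  set j := j0 with hj
  have hkey : ∀ w ∈ E ^ L, (ε : ℂ) ≤
      (inner ℂ (ξ j) (((π (s j) w : unitary (Hs (s j) →L[ℂ] Hs (s j))) :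
        Hs (s j) →L[ℂ] Hs (s j)) (ξ j)) : ℂ) := by
    intro w hw
    exact hi0 w j (hj0 _ (Finset.mem_image_of_mem i0 hw))
  -- abbreviations
  set H := Hs (s j) with hH
  set u : Γ → (H →L[ℂ] H) := fun g => ((π (s j) g : unitary (H →L[ℂ] H)) : H →L[ℂ] H) with hu
  set ζ : H := ξ j with hζdef
  have hζ : ‖ζ‖ = 1 := hξ j
  have hunorm : ∀ g (x : H), ‖u g x‖ = ‖x‖ := fun g x => Unitary.norm_map _ x
  have humul : ∀ g w (x : H), u g (u w x) = u (g * w) x := by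
    intro g w x
    simp only [hu, map_mul]
    rfl
  -- the coefficient bound, real form
  have hre : ∀ w ∈ E ^ L, ε' ≤ (inner ℂ ζ (u w ζ) : ℂ).re := by
    intro w hw
    have := hkey w hw
    rw [Complex.le_def] at this
    calc ε' ≤ ε := hε'le
    _ = (ε : ℂ).re := by simp
    _ ≤ _ := this.1
  -- the convex sets
  set Sset : ℕ → Set H := fun n => (fun w => u w ζ) '' (E ^ n : Finset Γ) with hSset
  set C : ℕ → Set H := fun n => convexHull ℝ (Sset n) with hC
  have hSmono : ∀ m n, m ≤ n → Sset m ⊆ Sset n := by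
    intro m n hmn
    exact Set.image_mono (by exact_mod_cast hEmono' m n hmn)
  have hCmono : ∀ m n, m ≤ n → C m ⊆ C n := fun m n hmn => convexHull_mono (hSmono m n hmn)
  -- half-space bound on C n for n ≤ L
  have hhalf : ∀ n, n ≤ L → ∀ v ∈ C n, ε' ≤ (inner ℂ ζ v : ℂ).re := by
    intro n hn
    have hlin : IsLinearMap ℝ (fun v : H => (inner ℂ ζ v : ℂ).re) := by
      constructor
      · intro x y; simp [inner_add_right]
      · intro c x
        rw [← algebraMap_smul ℂ c x, inner_smul_right]
        simp [Complex.coe_algebraMap]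
    have hconv : Convex ℝ { v : H | ε' ≤ (inner ℂ ζ v : ℂ).re } := convex_halfSpace_ge hlin ε'
    intro v hv
    refine hconv.convexHull_subset_iff.mpr ?_ hv
    rintro x ⟨w, hw, rfl⟩
    exact hre w (hEmono' n L hn hw)
  -- lower bound on norms in C n
  have hnormlb : ∀ n, n ≤ L → ∀ v ∈ C n, ε' ≤ ‖v‖ := by
    intro n hn v hv
    have h1 := hhalf n hn v hv
    have h2 : (inner ℂ ζ v : ℂ).re ≤ ‖(inner ℂ ζ v : ℂ)‖ := Complex.re_le_norm _
    have h3 : ‖(inner ℂ ζ v : ℂ)‖ ≤ ‖ζ‖ * ‖v‖ := norm_inner_le_norm _ _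
    rw [hζ, one_mul] at h3
    linarith
  -- ζ ∈ C n
  have hζmem : ∀ n, ζ ∈ C n := by
    intro n
    apply subset_convexHull
    refine ⟨1, ?_, ?_⟩
    · exact_mod_cast Finset.one_mem_pow hEone
    · simp only [hu, map_one]
      rfl
  -- the infimum of norms
  set a : ℕ → ℝ := fun n => sInf (norm '' C n) with ha
  have hbdd : ∀ n, BddBelow (norm '' C n) := by
    intro n
    exact ⟨0, by rintro r ⟨v, _, rfl⟩; exact norm_nonneg v⟩
  have hne' : ∀ n, (norm '' C n).Nonempty := fun n => ⟨‖ζ‖, ζ, hζmem n, rfl⟩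
  have ha_le : ∀ n, ∀ v ∈ C n, a n ≤ ‖v‖ := by
    intro n v hv
    exact csInf_le (hbdd n) ⟨v, hv, rfl⟩
  have ha_nonneg : ∀ n, 0 ≤ a n := by
    intro n
    exact le_csInf (hne' n) (by rintro r ⟨v, _, rfl⟩; exact norm_nonneg v)
  have ha_le_one : ∀ n, a n ≤ 1 := by
    intro n
    have := ha_le n ζ (hζmem n)
    rwa [hζ] at this
  have ha_mono : ∀ m n, m ≤ n → a n ≤ a m := by
    intro m n hmn
    exact le_csInf (hne' m) (by rintro r ⟨v, hv, rfl⟩; exact ha_le n v (hCmono m n hmn hv))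
  -- pigeonhole on b = a²
  set b : ℕ → ℝ := fun n => (a n) ^ 2 with hb
  have hb0 : b 0 ≤ 1 := by
    have h1 := ha_le_one 0; have h2 := ha_nonneg 0
    simp only [hb]; nlinarith
  have hbL : 0 ≤ b L := sq_nonneg _
  obtain ⟨ℓ, hℓL, hdrop⟩ := aux_exists_small_drop b κ L hb0 hbL hL
  -- near minimizer in C ℓ
  obtain ⟨r, ⟨η, hηC, rfl⟩, hηlt⟩ := Real.lt_sInf_add_pos (hne' ℓ) (show (0:ℝ) < κ / 3 by linarith)
  have hηsq : ‖η‖ ^ 2 ≤ b ℓ + κ := by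
    simp only [hb]
    have h1 : ‖η‖ < a ℓ + κ / 3 := hηlt
    have h2 : a ℓ ≤ 1 := ha_le_one ℓ
    have h3 : 0 ≤ a ℓ := ha_nonneg ℓ
    have h4 : 0 ≤ ‖η‖ := norm_nonneg _
    nlinarith
  have hηlb : ε' ≤ ‖η‖ := hnormlb ℓ (le_of_lt hℓL) η hηC
  -- the normalized vector
  refine ⟨s j, ‖η‖⁻¹ • η, ?_, ?_⟩
  · rw [norm_smul, norm_inv, norm_norm, inv_mul_cancel₀ (by linarith)]
  · intro g hg
    -- u g η ∈ C (ℓ+1)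
    have hugη : u g η ∈ C (ℓ + 1) := by
      have hlm : (u g η) ∈ (fun x => u g x) '' (C ℓ) := ⟨η, hηC, rfl⟩
      have him : (fun x => u g x) '' (C ℓ) = convexHull ℝ ((fun x => u g x) '' Sset ℓ) := by
        exact ((u g).restrictScalars ℝ).toLinearMap.image_convexHull (Sset ℓ)
      rw [him] at hlm
      refine convexHull_mono ?_ hlm
      rintro x ⟨y, ⟨w, hw, rfl⟩, rfl⟩
      refine ⟨g * w, ?_, ?_⟩
      · exact_mod_cast hmem_succ ℓ g (Finset.mem_insert_of_mem hg) w hw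
      · exact (humul g w ζ).symm
    have hηC' : η ∈ C (ℓ + 1) := hCmono ℓ (ℓ + 1) (Nat.le_succ ℓ) hηC
    -- midpoint in C (ℓ+1)
    have hmid : (2 : ℝ)⁻¹ • η + (2 : ℝ)⁻¹ • (u g η) ∈ C (ℓ + 1) := by
      have hcx : Convex ℝ (C ℓ.succ) := convex_convexHull ℝ _
      exact hcx hηC' hugη (by norm_num) (by norm_num) (by norm_num)
    have hmidnorm : a (ℓ + 1) ≤ ‖(2 : ℝ)⁻¹ • η + (2 : ℝ)⁻¹ • (u g η)‖ := ha_le _ _ hmid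
    have hsum : ‖η + u g η‖ = 2 * ‖(2 : ℝ)⁻¹ • η + (2 : ℝ)⁻¹ • (u g η)‖ := by
      rw [← norm_smul_of_nonneg (by norm_num : (0:ℝ) ≤ 2)]
      congr 1
      rw [smul_add, smul_smul, smul_smul]
      norm_num
    have hpar := parallelogram_law_with_norm ℂ η (u g η)
    have hun : ‖u g η‖ = ‖η‖ := hunorm g η
    have hsumlb : 2 * a (ℓ + 1) ≤ ‖η + u g η‖ := by
      rw [hsum]; linarith
    have haℓ1 : 0 ≤ a (ℓ + 1) := ha_nonneg _
    have hpar' : ‖η + u g η‖ ^ 2 + ‖η - u g η‖ ^ 2 = 2 * (‖η‖ ^ 2 + ‖u g η‖ ^ 2) := by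
      simpa [← pow_two] using hpar
    have hdiffsq : ‖η - u g η‖ ^ 2 ≤ 8 * κ := by
      have h1 : a ℓ ^ 2 - κ ≤ a (ℓ + 1) ^ 2 := hdrop
      have h2' : ‖η‖ ^ 2 ≤ a ℓ ^ 2 + κ := hηsq
      have h2 : (2 * a (ℓ + 1)) ^ 2 ≤ ‖η + u g η‖ ^ 2 := by
        have := norm_nonneg (η + u g η)
        nlinarith
      nlinarith [sq_nonneg (‖η - u g η‖)]
    have hdiff : ‖η - u g η‖ < ε' * δ := by
      have h8 : 0 ≤ ‖η - u g η‖ := norm_nonneg (η - u g η)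
      nlinarith [mul_pos hε'pos hδ]
    have heq : u g (‖η‖⁻¹ • η) - ‖η‖⁻¹ • η = ‖η‖⁻¹ • (u g η - η) := by
      rw [ContinuousLinearMap.map_smul_of_tower, ← smul_sub]
    rw [heq, norm_smul, norm_inv, norm_norm, norm_sub_rev]
    have hηpos : 0 < ‖η‖ := lt_of_lt_of_le hε'pos hηlb
    rw [inv_mul_lt_iff₀ hηpos]
    calc ‖η - u g η‖ < ε' * δ := hdiff
    _ ≤ ‖η‖ * δ := by nlinarith
end

section
/- Let G be a locally compact Hausdorff topological group. Suppose there exist ε > 0 and a net (f_i)_{i∈I} of continuous positive-definite functions on G vanishing at infinity with f_i(e) = 1, such that for every compact subset K ⊆ G there is i₀ ∈ I with: for all i ≥ i₀ and all t ∈ K, the number f_i(t) is real and f_i(t) ≥ ε. Then G has the Haagerup property: there exists a net (h_j)_{j∈J} of continuous positive-definite functions on G vanishing at infinity with h_j(e) = 1 such that h_j → 1 uniformly on every compact subset of G. -/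
open scoped ComplexOrder Pointwise
open Complex

/-- A function `f : G → ℂ` on a group is positive-definite if all the matrices
`[f(g_k⁻¹ g_j)]` are positive semi-definite. -/
def IsPosDefFn {G : Type} [Group G] (f : G → ℂ) : Prop :=
  ∀ (n : ℕ) (g : Fin n → G) (c : Fin n → ℂ),
    0 ≤ ∑ j, ∑ k, c j * (starRingEnd ℂ) (c k) * f ((g k)⁻¹ * g j)

/-- A function vanishes at infinity if outside suitable compact sets it is uniformly small. -/
def VanishesAtInfinity {G : Type} [TopologicalSpace G] (f : G → ℂ) : Prop :=
  ∀ δ : ℝ, 0 < δ → ∃ K : Set G, IsCompact K ∧ ∀ t ∉ K, ‖f t‖ < δ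

lemma posdef_fintype {G : Type} [Group G] {f : G → ℂ} (hf : IsPosDefFn f)
    {ι : Type} [Fintype ι] (p : ι → G) (c : ι → ℂ) :
    0 ≤ ∑ j, ∑ k, c j * (starRingEnd ℂ) (c k) * f ((p k)⁻¹ * p j) := by
  classical
  set N := Fintype.card ι
  set e : ι ≃ Fin N := Fintype.equivFin ι with he
  set F : ι → ι → ℂ := fun j k => c j * (starRingEnd ℂ) (c k) * f ((p k)⁻¹ * p j) with hF
  have key : (∑ j : Fin N, ∑ k : Fin N, F (e.symm j) (e.symm k)) = ∑ j : ι, ∑ k : ι, F j k := by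
    rw [Equiv.sum_comp e.symm (fun j => ∑ k : Fin N, F j (e.symm k))]
    exact Finset.sum_congr rfl (fun j _ => Equiv.sum_comp e.symm (F j))
  have := hf N (p ∘ e.symm) (c ∘ e.symm)
  have h2 : (0:ℂ) ≤ ∑ j : Fin N, ∑ k : Fin N, F (e.symm j) (e.symm k) := this
  rw [key] at h2
  exact h2

lemma posdef_inv {G : Type} [Group G] {f : G → ℂ} (hf : IsPosDefFn f) (g : G) :
    f g⁻¹ = (starRingEnd ℂ) (f g) := by
  have h1 : 0 ≤ f 1 := by simpa using hf 1 (fun _ => 1) (fun _ => 1)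
  have hA := hf 2 ![1, g] ![1, 1]
  have hB := hf 2 ![1, g] ![1, Complex.I]
  simp [Fin.sum_univ_two] at hA hB
  rw [Complex.nonneg_iff] at h1 hA hB
  apply Complex.ext
  · have := hB.2
    have h1im := h1.2
    simp [Complex.add_im, Complex.mul_im] at this
    simp [Complex.conj_re]
    linarith
  · have := hA.2
    have h1im := h1.2
    simp [Complex.add_im] at this
    simp [Complex.conj_im]
    linarith

noncomputable def Bform {G : Type} [Group G] (f : G → ℂ) {ι : Type} [Fintype ι] (p : ι → G)
    (u v : ι → ℂ) : ℂ :=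
  ∑ q : ι × ι, u q.1 * (starRingEnd ℂ) (v q.2) * f ((p q.2)⁻¹ * p q.1)

lemma Bform_eq_double {G : Type} [Group G] (f : G → ℂ) {ι : Type} [Fintype ι] (p : ι → G)
    (u v : ι → ℂ) :
    Bform f p u v = ∑ j, ∑ k, u j * (starRingEnd ℂ) (v k) * f ((p k)⁻¹ * p j) :=
  Fintype.sum_prod_type _

lemma Bform_pos {G : Type} [Group G] {f : G → ℂ} (hf : IsPosDefFn f) {ι : Type} [Fintype ι]
    (p : ι → G) (u : ι → ℂ) : 0 ≤ Bform f p u u := by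
  rw [Bform_eq_double]; exact posdef_fintype hf p u

lemma Bform_herm {G : Type} [Group G] {f : G → ℂ} (hf : IsPosDefFn f) {ι : Type} [Fintype ι]
    (p : ι → G) (u v : ι → ℂ) : Bform f p v u = (starRingEnd ℂ) (Bform f p u v) := by
  rw [Bform, Bform, map_sum]
  rw [← Equiv.sum_comp (Equiv.prodComm ι ι)
    (fun q : ι × ι => v q.1 * (starRingEnd ℂ) (u q.2) * f ((p q.2)⁻¹ * p q.1))]
  refine Finset.sum_congr rfl fun q _ => ?_
  simp only [Equiv.prodComm_apply, Prod.fst_swap, Prod.snd_swap, map_mul, Complex.conj_conj]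
  rw [← posdef_inv hf, mul_inv_rev, inv_inv]
  ring
lemma Bform_expand {G : Type} [Group G] (f : G → ℂ) {ι : Type} [Fintype ι] (p : ι → G)
    (x y : ι → ℂ) (s : ℂ) :
    Bform f p (fun j => x j + s * y j) (fun j => x j + s * y j)
      = Bform f p x x + (starRingEnd ℂ) s * Bform f p x y + s * Bform f p y x
        + (s * (starRingEnd ℂ) s) * Bform f p y y := by
  rw [Bform, Bform, Bform, Bform, Bform]
  simp only [Finset.mul_sum, ← Finset.sum_add_distrib]
  refine Finset.sum_congr rfl fun q _ => ?_
  simp only [map_add, map_mul]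
  ring

lemma Bform_cs {G : Type} [Group G] {f : G → ℂ} (hf : IsPosDefFn f) {ι : Type} [Fintype ι]
    (p : ι → G) (x y : ι → ℂ) :
    ‖Bform f p x y‖ ^ 2 ≤ (Bform f p x x).re * (Bform f p y y).re := by
  set a : ℝ := (Bform f p x x).re with ha
  set b : ℝ := (Bform f p y y).re with hb
  set z : ℂ := Bform f p x y with hz
  have ha0 : 0 ≤ a := (Complex.nonneg_iff.1 (Bform_pos hf p x)).1
  have hb0 : 0 ≤ b := (Complex.nonneg_iff.1 (Bform_pos hf p y)).1
  set n : ℝ := Complex.normSq z with hn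
  have hnz : n = ‖z‖ ^ 2 := by
    rw [hn, ← Complex.sq_norm]
  have hre : ∀ r : ℝ, 0 ≤ a + 2 * r * n + r ^ 2 * n * b := by
    intro r
    have hs := Bform_pos hf p (fun j => x j + (((r:ℝ):ℂ) * z) * y j)
    rw [Bform_expand] at hs
    rw [Bform_herm hf p x y] at hs
    have e1 : (starRingEnd ℂ) (((r:ℝ):ℂ) * z) * z = (((r * n : ℝ)):ℂ) := by
      rw [map_mul, Complex.conj_ofReal, mul_assoc, mul_comm ((starRingEnd ℂ) z) z,
        Complex.mul_conj, ← Complex.ofReal_mul]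
    have e2 : (((r:ℝ):ℂ) * z) * (starRingEnd ℂ) z = (((r * n : ℝ)):ℂ) := by
      rw [mul_assoc, Complex.mul_conj, ← Complex.ofReal_mul]
    have e3 : (((r:ℝ):ℂ) * z) * ((starRingEnd ℂ) (((r:ℝ):ℂ) * z)) = (((r^2 * n : ℝ)):ℂ) := by
      rw [map_mul, Complex.conj_ofReal]
      rw [show ((r:ℂ) * z) * ((r:ℂ) * (starRingEnd ℂ) z) = ((r:ℂ) * (r:ℂ)) * (z * (starRingEnd ℂ) z) by ring]
      rw [Complex.mul_conj, ← hn]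
      push_cast
      ring
    rw [e1, e2, e3] at hs
    have h1 := (Complex.nonneg_iff.1 hs).1
    simp only [Complex.add_re, Complex.conj_re, Complex.ofReal_re, Complex.re_ofReal_mul] at h1
    rw [← ha, ← hb] at h1
    linarith
  rw [← hnz]
  rcases eq_or_lt_of_le hb0 with hb1 | hb1
  · -- b = 0
    rcases eq_or_ne z 0 with h0 | h0
    · have hn0 : n = 0 := by rw [hnz, h0]; simp
      rw [hn0]
      exact mul_nonneg ha0 hb0
    · exfalso
      have hnpos : 0 < n := by
        rw [hnz]
        exact pow_pos (norm_pos_iff.2 h0) 2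
      have h4 := hre (-(a+1)/(2*n))
      rw [← hb1] at h4
      have hdiv : 2 * (-(a+1)/(2*n)) * n = -(a+1) := by field_simp
      nlinarith
  · -- b > 0
    have h4 := hre (-b⁻¹)
    have key : (a + 2 * -b⁻¹ * n + (-b⁻¹) ^ 2 * n * b) * b = a * b - n := by
      field_simp
      ring
    have h5 : 0 ≤ a * b - n := key ▸ mul_nonneg h4 hb1.le
    linarith

/-- The quadratic form value of a weighted configuration of points. -/
noncomputable def QVal {G : Type} [Group G] (φ : G → ℂ) {ι : Type} [Fintype ι]
    (g : ι → G) (lam : ι → ℝ) : ℂ :=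
  Bform φ g (fun j => (lam j : ℂ)) (fun j => (lam j : ℂ))

lemma QVal_eq_double {G : Type} [Group G] (φ : G → ℂ) {ι : Type} [Fintype ι]
    (g : ι → G) (lam : ι → ℝ) :
    QVal φ g lam = ∑ j, ∑ k, ((lam j : ℂ)) * ((lam k : ℂ)) * φ ((g k)⁻¹ * g j) := by
  rw [QVal, Bform_eq_double]
  simp [Complex.conj_ofReal]

/-- The set of quadratic form values of configurations supported in `S`. -/
def QSet {G : Type} [Group G] (φ : G → ℂ) (S : Set G) : Set ℝ :=
  {q | ∃ (n : ℕ) (g : Fin n → G) (lam : Fin n → ℝ),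
    (∀ j, g j ∈ S) ∧ (∀ j, 0 ≤ lam j) ∧ (∑ j, lam j = 1) ∧ q = (QVal φ g lam).re}

lemma QVal_reindex {G : Type} [Group G] (φ : G → ℂ) {ι κ : Type} [Fintype ι] [Fintype κ]
    (e : κ ≃ ι) (g : ι → G) (lam : ι → ℝ) :
    QVal φ (g ∘ e) (lam ∘ e) = QVal φ g lam := by
  rw [QVal, QVal, Bform, Bform]
  rw [← Equiv.sum_comp (Equiv.prodCongr e e)
    (fun q : ι × ι => ((lam q.1 : ℂ)) * (starRingEnd ℂ) ((lam q.2 : ℂ)) * φ ((g q.2)⁻¹ * g q.1))]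
  rfl

lemma mem_QSet {G : Type} [Group G] (φ : G → ℂ) (S : Set G) {ι : Type} [Fintype ι]
    (g : ι → G) (lam : ι → ℝ) (hg : ∀ j, g j ∈ S) (hlam : ∀ j, 0 ≤ lam j)
    (hsum : ∑ j, lam j = 1) : (QVal φ g lam).re ∈ QSet φ S := by
  classical
  set e : Fin (Fintype.card ι) ≃ ι := (Fintype.equivFin ι).symm
  refine ⟨Fintype.card ι, g ∘ e, lam ∘ e, fun j => hg _, fun j => hlam _, ?_, ?_⟩
  · simpa [Function.comp] using (Equiv.sum_comp e lam).trans hsum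
  · rw [QVal_reindex]

lemma QSet_mono {G : Type} [Group G] (φ : G → ℂ) {S S' : Set G} (h : S ⊆ S') :
    QSet φ S ⊆ QSet φ S' := by
  rintro q ⟨n, g, lam, hg, hlam, hsum, rfl⟩
  exact ⟨n, g, lam, fun j => h (hg j), hlam, hsum, rfl⟩

lemma one_mem_QSet {G : Type} [Group G] {φ : G → ℂ} (hone : φ 1 = 1) {S : Set G}
    (h1 : (1:G) ∈ S) : (1:ℝ) ∈ QSet φ S := by
  have := mem_QSet φ S (fun _ : Fin 1 => (1:G)) (fun _ => (1:ℝ)) (fun _ => h1)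
    (fun _ => zero_le_one) (by simp)
  simpa [QVal_eq_double, hone] using this

lemma QSet_lb {G : Type} [Group G] {φ : G → ℂ} (hf : IsPosDefFn φ) (hone : φ 1 = 1)
    {S : Set G} {ε : ℝ} (hε : 0 < ε) (hS : ∀ t ∈ S, (ε : ℂ) ≤ φ t) :
    ∀ q ∈ QSet φ S, ε ^ 2 ≤ q := by
  rintro q ⟨n, g, lam, hg, hlam, hsum, rfl⟩
  classical
  set p : Option (Fin n) → G := fun o => o.elim 1 g with hp
  set x : Option (Fin n) → ℂ := fun o => o.elim 0 (fun j => (lam j : ℂ)) with hx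
  set y : Option (Fin n) → ℂ := fun o => o.elim 1 (fun _ => 0) with hy
  have hBxx : Bform φ p x x = QVal φ g lam := by
    rw [Bform_eq_double, QVal_eq_double]
    simp [hp, hx, Fintype.sum_option, Complex.conj_ofReal]
  have hByy : Bform φ p y y = 1 := by
    rw [Bform_eq_double]
    simp [hp, hy, Fintype.sum_option, hone]
  have hBxy : Bform φ p x y = ∑ j, (lam j : ℂ) * φ (g j) := by
    rw [Bform_eq_double]
    simp [hp, hx, hy, Fintype.sum_option]
  have hcs := Bform_cs hf p x y
  rw [hBxx, hByy, hBxy] at hcs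
  set w : ℂ := ∑ j, (lam j : ℂ) * φ (g j) with hw
  have hrew : ε ≤ w.re := by
    rw [hw, Complex.re_sum]
    calc ε = ∑ j, lam j * ε := by rw [← Finset.sum_mul, hsum, one_mul]
    _ ≤ ∑ j, ((lam j : ℂ) * φ (g j)).re := by
        refine Finset.sum_le_sum fun j _ => ?_
        rw [Complex.re_ofReal_mul]
        have := (Complex.le_def.1 (hS (g j) (hg j))).1
        simp only [Complex.ofReal_re] at this
        exact mul_le_mul_of_nonneg_left this (hlam j)
  have hwnorm : ε ≤ ‖w‖ := le_trans hrew (Complex.re_le_norm w)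
  have h2 : ε ^ 2 ≤ ‖w‖ ^ 2 := pow_le_pow_left₀ hε.le hwnorm 2
  rw [Complex.one_re, mul_one] at hcs
  linarith

lemma QSet_nonneg {G : Type} [Group G] {φ : G → ℂ} (hf : IsPosDefFn φ) (S : Set G) :
    ∀ q ∈ QSet φ S, 0 ≤ q := by
  rintro q ⟨n, g, lam, _, _, _, rfl⟩
  exact (Complex.nonneg_iff.1 (Bform_pos hf g _)).1

lemma div_ofReal_nonneg {z : ℂ} {r : ℝ} (hz : 0 ≤ z) (hr : 0 ≤ r) : 0 ≤ z / (r : ℂ) := by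
  rw [div_eq_mul_inv, ← Complex.ofReal_inv, mul_comm]
  rw [Complex.nonneg_iff] at hz ⊢
  constructor
  · rw [Complex.re_ofReal_mul]
    exact mul_nonneg (inv_nonneg.2 hr) hz.1
  · rw [Complex.mul_im]
    simp [← hz.2]

set_option maxHeartbeats 1000000 in
/-- Main construction: a single good function for a given compact set and tolerance. -/
lemma main_step {G : Type} [Group G] [TopologicalSpace G] [IsTopologicalGroup G]
    (ε : ℝ) (hε : 0 < ε) (I : Type) (pI : Preorder I)
    (f : I → G → ℂ)
    (hcont : ∀ i, Continuous (f i))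
    (hvan : ∀ i, VanishesAtInfinity (f i))
    (hpd : ∀ i, IsPosDefFn (f i))
    (hnorm : ∀ i, f i 1 = 1)
    (hsep : ∀ K : Set G, IsCompact K → ∃ i₀ : I, ∀ i, i₀ ≤ i → ∀ t ∈ K, (ε : ℂ) ≤ f i t)
    (K : Set G) (hK : IsCompact K) (δ : ℝ) (hδ : 0 < δ) :
    ∃ h : G → ℂ, Continuous h ∧ VanishesAtInfinity h ∧ IsPosDefFn h ∧ h 1 = 1 ∧
      ∀ t ∈ K, ‖h t - 1‖ < δ := by
  classical
  -- the basic compact symmetric set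
  set L : Set G := K ∪ K⁻¹ ∪ {1} with hL
  have h1L : (1:G) ∈ L := by simp [hL]
  have hKL : K ⊆ L := fun t ht => Or.inl (Or.inl ht)
  have hLc : IsCompact L := (hK.union hK.inv).union isCompact_singleton
  have hLpowc : ∀ N : ℕ, IsCompact (L ^ N) := by
    intro N
    induction N with
    | zero => rw [pow_zero]; exact isCompact_singleton
    | succ N ih => rw [pow_succ]; exact ih.mul hLc
  -- tolerance
  set δ' : ℝ := ε ^ 2 * δ ^ 2 / 17 with hδ'
  have hδ'pos : 0 < δ' := by positivity
  set M : ℕ := ⌈1 / δ'⌉₊ + 1 with hM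
  have hMδ' : 1 ≤ M * δ' := by
    have h1 : 1 / δ' ≤ (⌈1 / δ'⌉₊ : ℝ) := Nat.le_ceil _
    have h2 : ((⌈1 / δ'⌉₊ : ℕ) : ℝ) ≤ M := by
      rw [hM]; push_cast; linarith
    calc (1:ℝ) = (1/δ') * δ' := by field_simp
    _ ≤ (M:ℝ) * δ' := by apply mul_le_mul_of_nonneg_right (h1.trans h2) hδ'pos.le
  -- choose the function
  obtain ⟨i₀, hi₀⟩ := hsep (L ^ (M + 2)) (hLpowc _)
  set φ : G → ℂ := f i₀ with hφ
  have hφpd : IsPosDefFn φ := hpd i₀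
  have hφ1 : φ 1 = 1 := hnorm i₀
  have hφε : ∀ t ∈ L ^ (M + 2), (ε : ℂ) ≤ φ t := hi₀ i₀ le_rfl
  have hεle1 : ε ≤ 1 := by
    have h := hφε 1 (Set.one_mem_pow h1L)
    rw [hφ1] at h
    exact_mod_cast Complex.real_le_real.1 (by exact_mod_cast h)
  -- infima
  set m : ℕ → ℝ := fun N => sInf (QSet φ (L ^ N)) with hm
  have hQne : ∀ N, (QSet φ (L ^ N)).Nonempty :=
    fun N => ⟨1, one_mem_QSet hφ1 (Set.one_mem_pow h1L)⟩
  have hQbdd : ∀ N, BddBelow (QSet φ (L ^ N)) :=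
    fun N => ⟨0, fun q hq => QSet_nonneg hφpd _ q hq⟩
  have hm_le_one : ∀ N, m N ≤ 1 :=
    fun N => csInf_le (hQbdd N) (one_mem_QSet hφ1 (Set.one_mem_pow h1L))
  have hm_lb : ∀ N, N ≤ M + 2 → ε ^ 2 ≤ m N := by
    intro N hN
    apply le_csInf (hQne N)
    intro q hq
    refine QSet_lb hφpd hφ1 hε (fun t ht => hφε t ?_) q hq
    exact Set.pow_subset_pow_right h1L hN ht
  have hm_anti : ∀ N, m (N + 1) ≤ m N := by
    intro N
    exact csInf_le_csInf (hQbdd (N+1)) (hQne N)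
      (QSet_mono φ (Set.pow_subset_pow_right h1L (Nat.le_succ N)))
  -- find a small gap
  have hgap : ∃ N, 1 ≤ N ∧ N ≤ M ∧ m N - m (N + 1) ≤ δ' := by
    by_contra hcon
    push_neg at hcon
    have key : ∀ k, k ≤ M → m (k + 1) + k * δ' ≤ m 1 := by
      intro k
      induction k with
      | zero => intro _; simp
      | succ k ih =>
        intro hk
        have h1 : m (k + 1) + k * δ' ≤ m 1 := ih (by omega)
        have h2 : δ' < m (k + 1) - m (k + 2) := hcon (k + 1) (by omega) (by omega)
        push_cast
        push_cast at h1
        linarith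
    have hfin := key M le_rfl
    have hlb := hm_lb (M + 1) (by omega)
    have hub := hm_le_one 1
    nlinarith [hε, hεle1]
  obtain ⟨N, hN1, hNM, hNgap⟩ := hgap
  -- near-minimizer
  obtain ⟨q, hqmem, hqlt⟩ := exists_lt_of_csInf_lt (hQne N) (lt_add_of_pos_right (m N) hδ'pos)
  obtain ⟨n, g, lam, hgS, hlam, hsum, rfl⟩ := hqmem
  set Qc : ℂ := QVal φ g lam with hQc
  set Q : ℝ := Qc.re with hQdef
  have hQmem : Q ∈ QSet φ (L ^ N) := ⟨n, g, lam, hgS, hlam, hsum, rfl⟩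
  have hQcpos : 0 ≤ Qc := by rw [hQc, QVal]; exact Bform_pos hφpd g _
  have hmNQ : m N ≤ Q := csInf_le (hQbdd N) hQmem
  have hQlb : ε ^ 2 ≤ Q := le_trans (hm_lb N (by omega)) hmNQ
  have hQpos : 0 < Q := lt_of_lt_of_le (by positivity) hQlb
  have hQcreal : Qc = ((Q : ℝ) : ℂ) := by
    rw [hQdef]
    exact Complex.eq_re_of_ofReal_le (by exact_mod_cast hQcpos)
  set Num : G → ℂ := fun t => ∑ j, ∑ k, ((lam j : ℂ)) * ((lam k : ℂ)) * φ ((g k)⁻¹ * (t * g j))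
    with hNum
  set h : G → ℂ := fun t => Num t / ((Q : ℝ) : ℂ) with hh
  have hcont' : Continuous h := by
    apply Continuous.div_const
    apply continuous_finset_sum
    intro j _
    apply continuous_finset_sum
    intro k _
    exact continuous_const.mul ((hcont i₀).comp
      (((continuous_mul_left ((g k)⁻¹)).comp (continuous_mul_right (g j)))))
  have hone' : h 1 = 1 := by
    have : Num 1 = Qc := by
      rw [hNum, hQc, QVal_eq_double]
      simp
    rw [hh]
    simp only
    rw [this, hQcreal]
    exact div_self (by exact_mod_cast hQpos.ne')
  have hpd' : IsPosDefFn h := by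
    intro n' x c
    have hrw : ∀ p q : Fin n', c p * (starRingEnd ℂ) (c q) * h ((x q)⁻¹ * x p)
        = (c p * (starRingEnd ℂ) (c q) * Num ((x q)⁻¹ * x p)) / ((Q:ℝ):ℂ) := by
      intro p q; rw [hh]; ring
    simp only [hrw, ← Finset.sum_div]
    apply div_ofReal_nonneg _ hQpos.le
    have big := posdef_fintype hφpd (p := fun pr : Fin n' × Fin n => x pr.1 * g pr.2)
      (c := fun pr : Fin n' × Fin n => c pr.1 * ((lam pr.2 : ℝ) : ℂ))
    simp only [Fintype.sum_prod_type] at big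
    convert big using 1
    simp only [hNum, Finset.mul_sum]
    refine Finset.sum_congr rfl fun p _ => ?_
    rw [Finset.sum_comm]
    refine Finset.sum_congr rfl fun j _ => ?_
    refine Finset.sum_congr rfl fun q _ => ?_
    refine Finset.sum_congr rfl fun k _ => ?_
    have harg : (g k)⁻¹ * ((x q)⁻¹ * x p * g j) = (x q * g k)⁻¹ * (x p * g j) := by
      simp [mul_inv_rev, mul_assoc]
    rw [harg, map_mul, Complex.conj_ofReal]
    ring
  have hvan' : VanishesAtInfinity h := by
    intro δ₂ hδ₂
    obtain ⟨Kf, hKfc, hKf⟩ := hvan i₀ (δ₂ * Q / 2) (by positivity)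
    set Kc : Set G := ⋃ pr : Fin n × Fin n, (fun z => g pr.2 * z * (g pr.1)⁻¹) '' Kf with hKc
    refine ⟨Kc, ?_, ?_⟩
    · apply isCompact_iUnion
      intro pr
      apply hKfc.image
      exact (continuous_mul_right ((g pr.1)⁻¹)).comp (continuous_mul_left (g pr.2))
    · intro t ht
      have hnot : ∀ j k : Fin n, (g k)⁻¹ * (t * g j) ∉ Kf := by
        intro j k hmem
        apply ht
        rw [hKc]
        refine Set.mem_iUnion.2 ⟨(j, k), ⟨(g k)⁻¹ * (t * g j), hmem, ?_⟩⟩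
        simp [mul_assoc]
      have hb : ‖Num t‖ ≤ δ₂ * Q / 2 := by
        rw [hNum]
        simp only
        calc ‖∑ j, ∑ k, ((lam j : ℂ)) * ((lam k : ℂ)) * φ ((g k)⁻¹ * (t * g j))‖
            ≤ ∑ j, ‖∑ k, ((lam j : ℂ)) * ((lam k : ℂ)) * φ ((g k)⁻¹ * (t * g j))‖ :=
              norm_sum_le _ _
          _ ≤ ∑ j, ∑ k, ‖((lam j : ℂ)) * ((lam k : ℂ)) * φ ((g k)⁻¹ * (t * g j))‖ :=
              Finset.sum_le_sum fun j _ => norm_sum_le _ _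
          _ ≤ ∑ j, ∑ k, lam j * lam k * (δ₂ * Q / 2) := by
              refine Finset.sum_le_sum fun j _ => Finset.sum_le_sum fun k _ => ?_
              rw [norm_mul, norm_mul, Complex.norm_real, Complex.norm_real,
                Real.norm_of_nonneg (hlam j), Real.norm_of_nonneg (hlam k)]
              exact mul_le_mul_of_nonneg_left (le_of_lt (hKf _ (hnot j k)))
                (mul_nonneg (hlam j) (hlam k))
          _ = δ₂ * Q / 2 := by
              have inner : ∀ j : Fin n, (∑ k, lam j * lam k * (δ₂ * Q / 2))
                  = lam j * (δ₂ * Q / 2) := by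
                intro j
                calc (∑ k, lam j * lam k * (δ₂ * Q / 2))
                    = (∑ k, lam k) * (lam j * (δ₂ * Q / 2)) := by
                      rw [Finset.sum_mul]
                      exact Finset.sum_congr rfl fun k _ => by ring
                  _ = lam j * (δ₂ * Q / 2) := by rw [hsum, one_mul]
              simp only [inner]
              rw [← Finset.sum_mul, hsum, one_mul]
      have : ‖h t‖ = ‖Num t‖ / Q := by
        rw [hh]
        simp only
        rw [norm_div, Complex.norm_real, Real.norm_of_nonneg hQpos.le]
      rw [this]
      calc ‖Num t‖ / Q ≤ (δ₂ * Q / 2) / Q := by gcongr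
          _ < δ₂ := by
            have heq : (δ₂ * Q / 2) / Q = δ₂ / 2 := by field_simp
            rw [heq]
            linarith
  refine ⟨h, hcont', hvan', hpd', hone', ?_⟩
  intro t htK
  set Rc : ℂ := Num t with hRc
  set Tc : ℂ := ∑ j, ∑ k, ((lam j : ℂ)) * ((lam k : ℂ)) * φ ((g k)⁻¹ * (t⁻¹ * g j)) with hTc
  set P : Fin n ⊕ Fin n → G := Sum.elim g (fun j => t * g j) with hP
  set xc : Fin n ⊕ Fin n → ℂ :=
    Sum.elim (fun j => -((lam j : ℝ) : ℂ)) (fun j => ((lam j : ℝ) : ℂ)) with hxc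
  set yc : Fin n ⊕ Fin n → ℂ := Sum.elim (fun j => ((lam j : ℝ) : ℂ)) (fun _ => 0) with hyc
  have hTcconj : Tc = (starRingEnd ℂ) Rc := by
    rw [hTc, hRc, hNum, map_sum]
    rw [Finset.sum_comm]
    refine Finset.sum_congr rfl fun k _ => ?_
    rw [map_sum]
    refine Finset.sum_congr rfl fun j _ => ?_
    rw [map_mul, map_mul, Complex.conj_ofReal, Complex.conj_ofReal, ← posdef_inv hφpd]
    have : ((g j)⁻¹ * (t * g k))⁻¹ = (g k)⁻¹ * (t⁻¹ * g j) := by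
      simp [mul_inv_rev, mul_assoc]
    rw [this]
    ring
  have hByy : Bform φ P yc yc = Qc := by
    rw [Bform_eq_double, hQc, QVal_eq_double]
    simp [hP, hyc, Fintype.sum_sum_type, Complex.conj_ofReal]
  have hBxy : Bform φ P xc yc = Rc - Qc := by
    rw [Bform_eq_double]
    rw [hRc, hNum, hQc, QVal_eq_double]
    simp only [hP, hxc, hyc, Fintype.sum_sum_type, Sum.elim_inl, Sum.elim_inr, map_zero,
      mul_zero, zero_mul, Finset.sum_const_zero, add_zero, map_neg, Complex.conj_ofReal,
      neg_mul, Finset.sum_neg_distrib, mul_inv_rev]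
    ring
  have hBxx : (Bform φ P xc xc).re = 2 * Q - 2 * Rc.re := by
    have hc : Bform φ P xc xc = Qc + Qc - Rc - Tc := by
      rw [Bform_eq_double]
      rw [hRc, hNum, hTc, hQc, QVal_eq_double]
      simp only [hP, hxc, Fintype.sum_sum_type, Sum.elim_inl, Sum.elim_inr, map_neg,
        Complex.conj_ofReal, neg_mul, mul_neg, neg_neg, Finset.sum_neg_distrib, mul_inv_rev]
      have harg1 : ∀ j k : Fin n, (t * g k)⁻¹ * (t * g j) = (g k)⁻¹ * g j := by
        intro j k; simp [mul_inv_rev, mul_assoc]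
      have harg2 : ∀ j k : Fin n, (t * g k)⁻¹ * g j = (g k)⁻¹ * (t⁻¹ * g j) := by
        intro j k; simp [mul_inv_rev, mul_assoc]
      simp only [harg1, harg2, mul_assoc, inv_mul_cancel_left]
      simp only [Finset.sum_sub_distrib, Finset.sum_add_distrib, Finset.sum_neg_distrib]
      ring
    rw [hc, hTcconj]
    simp [Complex.sub_re, Complex.add_re, Complex.conj_re, hQdef]
    ring
  -- the midpoint configuration
  set lamu : Fin n ⊕ Fin n → ℝ := Sum.elim (fun j => lam j / 2) (fun j => lam j / 2) with hlamu
  have huval : QVal φ P lamu = Qc / 2 + Rc / 4 + Tc / 4 := by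
    rw [QVal_eq_double, hRc, hNum, hTc, hQc, QVal_eq_double]
    simp only [hP, hlamu, Fintype.sum_sum_type, Sum.elim_inl, Sum.elim_inr]
    have harg1 : ∀ j k : Fin n, (t * g k)⁻¹ * (t * g j) = (g k)⁻¹ * g j := by
      intro j k; simp [mul_inv_rev, mul_assoc]
    have harg2 : ∀ j k : Fin n, (t * g k)⁻¹ * g j = (g k)⁻¹ * (t⁻¹ * g j) := by
      intro j k; simp [mul_inv_rev, mul_assoc]
    have blk : ∀ w : Fin n → Fin n → ℂ,
        (∑ j, ∑ k, (((lam j : ℝ):ℂ)/2) * (((lam k : ℝ):ℂ)/2) * w j k)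
          = (∑ j, ∑ k, ((lam j : ℝ):ℂ) * ((lam k : ℝ):ℂ) * w j k) / 4 := by
      intro w
      rw [Finset.sum_div]
      refine Finset.sum_congr rfl fun j _ => ?_
      rw [Finset.sum_div]
      refine Finset.sum_congr rfl fun k _ => ?_
      ring
    simp only [harg1, harg2]
    push_cast
    simp only [Finset.sum_add_distrib]
    rw [blk, blk, blk]
    ring
  have humem : (QVal φ P lamu).re ∈ QSet φ (L ^ (N + 1)) := by
    apply mem_QSet
    · intro j
      cases j with
      | inl j => exact Set.pow_subset_pow_right h1L (Nat.le_succ N) (hgS j)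
      | inr j =>
        rw [pow_succ']
        exact Set.mul_mem_mul (hKL htK) (hgS j)
    · intro j
      cases j with
      | inl j => simp [hlamu]; linarith [hlam j]
      | inr j => simp [hlamu]; linarith [hlam j]
    · simp [hlamu, Fintype.sum_sum_type, ← Finset.sum_div, hsum]
      norm_num
  have hure : (QVal φ P lamu).re = Q / 2 + Rc.re / 2 := by
    rw [huval, hTcconj, hQdef]
    simp [Complex.add_re, Complex.div_re, Complex.normSq, Complex.conj_re, Complex.conj_im]
    ring
  have hmu : m (N + 1) ≤ Q / 2 + Rc.re / 2 := hure ▸ csInf_le (hQbdd (N + 1)) humem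
  have hgapQ : 2 * Q - 2 * Rc.re ≤ 8 * δ' := by
    have e1 : m N ≤ m (N + 1) + δ' := by linarith [hNgap]
    linarith [hqlt, hmNQ]
  have hcs := Bform_cs hφpd P xc yc
  rw [hBxy, hByy, hBxx, ← hQdef] at hcs
  have hval : ‖h t - 1‖ = ‖Rc - Qc‖ / Q := by
    rw [hh]
    simp only
    rw [show Num t / ((Q:ℝ):ℂ) - 1 = (Num t - ((Q:ℝ):ℂ)) / ((Q:ℝ):ℂ) by
      rw [sub_div, div_self (by exact_mod_cast hQpos.ne')]]
    rw [norm_div, Complex.norm_real, Real.norm_of_nonneg hQpos.le, ← hRc, ← hQcreal]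
  have h1 : ‖Rc - Qc‖ ^ 2 ≤ 8 * δ' * Q :=
    le_trans hcs (mul_le_mul_of_nonneg_right hgapQ hQpos.le)
  have h2 : ‖h t - 1‖ ^ 2 = ‖Rc - Qc‖ ^ 2 / Q ^ 2 := by rw [hval, div_pow]
  have h3 : ‖h t - 1‖ ^ 2 ≤ 8 * δ' / Q := by
    rw [h2]
    have heq : 8 * δ' / Q = (8 * δ' * Q) / Q ^ 2 := by
      field_simp
    rw [heq]
    gcongr
  have h4 : 8 * δ' / Q ≤ 8 * δ' / ε ^ 2 :=
    div_le_div_of_nonneg_left (by positivity) (by positivity) hQlb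
  have h5 : 8 * δ' / ε ^ 2 = 8 * δ ^ 2 / 17 := by
    rw [hδ']
    field_simp
  have h6 : ‖h t - 1‖ ^ 2 < δ ^ 2 := by
    rw [h5] at h4
    nlinarith [mul_pos hδ hδ]
  nlinarith [norm_nonneg (h t - 1), hδ, h6]

set_option maxHeartbeats 1000000 in
/-- If a locally compact group `G` admits `ε > 0` and a net of normalized continuous
positive-definite functions vanishing at infinity which, on every compact set, are eventually
real-valued and `≥ ε`, then `G` has the Haagerup property. -/
theorem haagerup_of_eventually_separated_posdef
    {G : Type} [Group G] [TopologicalSpace G] [IsTopologicalGroup G]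
    [LocallyCompactSpace G] [T2Space G]
    (ε : ℝ) (hε : 0 < ε)
    (I : Type) (pI : Preorder I) (hne : Nonempty I) (hdir : IsDirected I (· ≤ ·))
    (f : I → G → ℂ)
    (hcont : ∀ i, Continuous (f i))
    (hvan : ∀ i, VanishesAtInfinity (f i))
    (hpd : ∀ i, IsPosDefFn (f i))
    (hnorm : ∀ i, f i 1 = 1)
    (hsep : ∀ K : Set G, IsCompact K → ∃ i₀ : I, ∀ i, i₀ ≤ i → ∀ t ∈ K, (ε : ℂ) ≤ f i t) :
    ∃ (J : Type) (_ : Preorder J), Nonempty J ∧ IsDirected J (· ≤ ·) ∧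
      ∃ h : J → G → ℂ,
        (∀ j, Continuous (h j) ∧ VanishesAtInfinity (h j) ∧ IsPosDefFn (h j) ∧ h j 1 = 1) ∧
        ∀ K : Set G, IsCompact K → ∀ δ : ℝ, 0 < δ → ∃ j₀ : J, ∀ j, j₀ ≤ j →
          ∀ t ∈ K, ‖h j t - 1‖ < δ := by
  classical
  set J : Type := {p : Set G × ℝ // IsCompact p.1 ∧ 0 < p.2} with hJ
  letI pJ : Preorder J :=
    { le := fun a b => a.1.1 ⊆ b.1.1 ∧ b.1.2 ≤ a.1.2
      lt := fun a b => (a.1.1 ⊆ b.1.1 ∧ b.1.2 ≤ a.1.2) ∧ ¬(b.1.1 ⊆ a.1.1 ∧ a.1.2 ≤ b.1.2)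
      lt_iff_le_not_ge := fun a b => Iff.rfl
      le_refl := fun a => ⟨subset_rfl, le_rfl⟩
      le_trans := fun a b c hab hbc => ⟨hab.1.trans hbc.1, hbc.2.trans hab.2⟩ }
  have H : ∀ j : J, ∃ h : G → ℂ, Continuous h ∧ VanishesAtInfinity h ∧ IsPosDefFn h ∧
      h 1 = 1 ∧ ∀ t ∈ j.1.1, ‖h t - 1‖ < j.1.2 :=
    fun j => main_step ε hε I pI f hcont hvan hpd hnorm hsep j.1.1 j.2.1 j.1.2 j.2.2
  choose h hc hv hp h1 hest using H
  refine ⟨J, pJ, ⟨⟨(∅, 1), isCompact_empty, one_pos⟩⟩, ⟨fun a b => ?_⟩,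
    h, fun j => ⟨hc j, hv j, hp j, h1 j⟩, ?_⟩
  · refine ⟨⟨(a.1.1 ∪ b.1.1, min a.1.2 b.1.2), a.2.1.union b.2.1, lt_min a.2.2 b.2.2⟩,
      ⟨Set.subset_union_left, min_le_left _ _⟩, ⟨Set.subset_union_right, min_le_right _ _⟩⟩
  · intro K hK δ hδ
    refine ⟨⟨(K, δ), hK, hδ⟩, ?_⟩
    intro j hj t ht
    exact lt_of_lt_of_le (hest j t (hj.1 ht)) hj.2
end
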